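/- Let d > 0 and let f be given by an admissible representation f(z) = (−2π/(a·log z))·(1 + Σ_{n≥1} Φ_n(z)/(log z)^n). For x < 0 near 0, define g(x) = f(x)^{1/d} = exp(d^{−1}·Log f(x)) with the branch satisfying 1^{1/d} = 1, and write g(x) = u*(x) + i·v*(x). Then v*(x) = (a/(2d))·(u*(x))^{1+d} + o((u*(x))^{1+d}) as x → 0⁻; that is, the curve Γ^{1/d} = { f(x)^{1/d} : x ∈ (−ε, 0) } has d-th order tangency to the real axis at the origin. -/

import Mathlib

open Complex Filter Topology

/-- `Phi c n z = Σ_{k≥0} c_{n,k} z^k`. -/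
noncomputable def Phi (c : ℕ → ℕ → ℝ) (n : ℕ) (z : ℂ) : ℂ :=
  ∑' k : ℕ, (c n k : ℂ) * z ^ k

/-- Termwise derivative `Σ_{k≥1} k·c_{n,k} z^{k-1}`. -/
noncomputable def PhiD (c : ℕ → ℕ → ℝ) (n : ℕ) (z : ℂ) : ℂ :=
  ∑' k : ℕ, ((k + 1 : ℕ) : ℂ) * (c n (k + 1) : ℂ) * z ^ k

/-- `f(z) = (−2π/(a·log z))·(1 + Σ_{n≥1} Φ_n(z)/(log z)^n)`, where `Complex.log`
is the branch with `log i = iπ/2`, continuous on the closed upper half-plane minus `0`. -/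
noncomputable def fRep (a : ℝ) (c : ℕ → ℕ → ℝ) (z : ℂ) : ℂ :=
  (-(2 * (Real.pi : ℂ)) / ((a : ℂ) * Complex.log z)) *
    (1 + ∑' n : ℕ, Phi c (n + 1) z / (Complex.log z) ^ (n + 1))

/-- Admissibility of the representation `fRep a c`. -/
def Admissible (a : ℝ) (c : ℕ → ℕ → ℝ) : Prop :=
  0 < a ∧
  (∃ B : ℝ, ∀ n : ℕ, 1 ≤ n → ∀ k : ℕ, 1 ≤ k → |c n k| ^ ((1 : ℝ) / (k : ℝ)) ≤ B) ∧
  (∃ r > (0 : ℝ), ∃ M > (0 : ℝ), ∀ n : ℕ, 1 ≤ n → ∀ z : ℂ,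
      ‖z‖ ≤ r → 0 ≤ z.im → ‖Phi c n z‖ ≤ M ^ n) ∧
  (∃ r > (0 : ℝ), ∃ M > (0 : ℝ), ∀ n : ℕ, 1 ≤ n → ∀ z : ℂ,
      ‖z‖ ≤ r → 0 ≤ z.im → ‖PhiD c n z‖ ≤ M ^ n) ∧
  c 1 0 ≠ 0

/-! ### Auxiliary lemmas -/

lemma tendsto_div_self_of_deriv {f : ℝ → ℝ} (h : HasDerivAt f 1 0) (h0 : f 0 = 0) :
    Tendsto (fun y : ℝ => f y / y) (𝓝[≠] (0:ℝ)) (𝓝 1) := by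
  have H := hasDerivAt_iff_tendsto_slope.mp h
  refine H.congr' ?_
  filter_upwards with y
  simp [slope_def_field, h0]

lemma tendsto_arctan_div : Tendsto (fun y : ℝ => Real.arctan y / y) (𝓝[≠] (0:ℝ)) (𝓝 1) := by
  apply tendsto_div_self_of_deriv _ Real.arctan_zero
  simpa using Real.hasDerivAt_arctan 0

lemma tendsto_sin_div : Tendsto (fun y : ℝ => Real.sin y / y) (𝓝[≠] (0:ℝ)) (𝓝 1) := by
  apply tendsto_div_self_of_deriv _ Real.sin_zero
  simpa using Real.hasDerivAt_sin 0

lemma Phi_ofReal_im (c : ℕ → ℕ → ℝ) (n : ℕ) (x : ℝ) : (Phi c n (x:ℂ)).im = 0 := by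
  unfold Phi
  by_cases h : Summable (fun k : ℕ => (c n k : ℂ) * (x:ℂ) ^ k)
  · rw [← Complex.imCLM_apply, Complex.imCLM.map_tsum h]
    have : ∀ k : ℕ, Complex.imCLM ((c n k : ℂ) * (x:ℂ) ^ k) = 0 := by
      intro k
      simp [← Complex.ofReal_pow, ← Complex.ofReal_mul]
    simp [this]
  · rw [tsum_eq_zero_of_not_summable h]; simp

lemma log_neg_re {x : ℝ} (hx : x < 0) : (Complex.log (x:ℂ)).re = Real.log (-x) := by
  rw [Complex.log_re, Complex.norm_real, Real.norm_eq_abs, abs_of_neg hx]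

lemma log_neg_im {x : ℝ} (hx : x < 0) : (Complex.log (x:ℂ)).im = Real.pi := by
  rw [Complex.log_im, Complex.arg_ofReal_of_neg hx]

/-- `TT x = -log(-x)`, which tends to `∞` as `x → 0⁻`. -/
noncomputable def TT (x : ℝ) : ℝ := -Real.log (-x)

lemma tendsto_TT : Tendsto TT (𝓝[<] (0:ℝ)) atTop := by
  have h1 : Tendsto (fun x : ℝ => -x) (𝓝[<] (0:ℝ)) (𝓝[>] (0:ℝ)) := by
    simpa using (tendsto_neg_nhdsLT (a := (0:ℝ)))
  have h2 := Real.tendsto_log_nhdsGT_zero.comp h1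
  have h3 := tendsto_neg_atBot_atTop.comp h2
  exact h3

/-- The correction series `S(x) = Σ_{n≥1} Φ_n(x)/(log x)^n`. -/
noncomputable def SS (c : ℕ → ℕ → ℝ) (x : ℝ) : ℂ :=
  ∑' n : ℕ, Phi c (n + 1) (x:ℂ) / (Complex.log (x:ℂ)) ^ (n + 1)

/-- `w(x) = (T + iπ)(1 + S(x))`. -/
noncomputable def ww (c : ℕ → ℕ → ℝ) (x : ℝ) : ℂ :=
  (((TT x : ℝ) : ℂ) + (Real.pi : ℂ) * Complex.I) * (1 + SS c x)

/-- `K(x) = 2π/(a (T² + π²))`, so that `f(x) = K(x)·w(x)`. -/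
noncomputable def KK (a : ℝ) (x : ℝ) : ℝ :=
  2 * Real.pi / (a * ((TT x) ^ 2 + Real.pi ^ 2))

lemma log_neg_eq' {x : ℝ} (hx : x < 0) :
    Complex.log (x:ℂ) = -((TT x : ℝ) : ℂ) + (Real.pi : ℂ) * Complex.I := by
  apply Complex.ext
  · rw [Complex.log_re, Complex.norm_real, Real.norm_eq_abs, abs_of_neg hx]
    simp [TT]
  · rw [Complex.log_im, Complex.arg_ofReal_of_neg hx]
    simp

lemma fRep_eq (a : ℝ) (c : ℕ → ℕ → ℝ) (ha : 0 < a) {x : ℝ} (hx : x < 0) :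
    fRep a c (x:ℂ) = ((KK a x : ℝ) : ℂ) * ww c x := by
  have hπ := Real.pi_pos
  have hL : Complex.log (x:ℂ) = -((TT x : ℝ) : ℂ) + (Real.pi : ℂ) * Complex.I :=
    log_neg_eq' hx
  have hLne : Complex.log (x:ℂ) ≠ 0 := by
    intro h
    have := congrArg Complex.im h
    rw [Complex.log_im, Complex.arg_ofReal_of_neg hx] at this
    exact hπ.ne' (by simpa using this)
  have hfac : -(2 * (Real.pi : ℂ)) / ((a : ℂ) * Complex.log (x:ℂ))
      = ((KK a x : ℝ) : ℂ) * (((TT x : ℝ) : ℂ) + (Real.pi : ℂ) * Complex.I) := by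
    have hA : (a:ℂ) ≠ 0 := by exact_mod_cast ha.ne'
    have hB : (((TT x)^2 + Real.pi^2 : ℝ) : ℂ) ≠ 0 := by
      have : (0:ℝ) < (TT x)^2 + Real.pi^2 := by positivity
      exact_mod_cast this.ne'
    push_cast at hB
    rw [div_eq_iff (mul_ne_zero hA hLne), hL, KK]
    push_cast
    field_simp
    ring_nf
    rw [Complex.I_sq]
    ring
  show (-(2 * (Real.pi : ℂ)) / ((a : ℂ) * Complex.log (x:ℂ))) * (1 + SS c x) = _
  rw [hfac, ww]
  ring

lemma key_est (c : ℕ → ℕ → ℝ) (r M : ℝ) (hM : 0 < M)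
    (hPhi : ∀ n : ℕ, 1 ≤ n → ∀ z : ℂ,
      ‖z‖ ≤ r → 0 ≤ z.im → ‖Phi c n z‖ ≤ M ^ n)
    {x : ℝ} (hx : x < 0) (hxr : |x| ≤ r) (hT2M : 2 * M ≤ TT x) (hT1 : 1 ≤ TT x) :
    Summable (fun n : ℕ => Phi c (n+1) (x:ℂ) / (Complex.log (x:ℂ)) ^ (n+1)) ∧
      ‖SS c x‖ ≤ 2 * M / TT x ∧
      |(SS c x).im| ≤ (M * Real.pi + 2 * M ^ 2) / (TT x) ^ 2 := by
  have hπ := Real.pi_pos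
  set L := Complex.log (x:ℂ) with hL
  set T := TT x with hTdef
  have hT0 : 0 < T := lt_of_lt_of_le one_pos hT1
  have hlogx : Real.log (-x) = -T := by simp [hTdef, TT]
  have habsL : T ≤ ‖L‖ := by
    have h1 := Complex.abs_re_le_norm L
    rw [log_neg_re hx, hlogx] at h1
    rw [abs_neg, abs_of_pos hT0] at h1
    exact h1
  have habsL0 : 0 < ‖L‖ := lt_of_lt_of_le hT0 habsL
  set ρ := M / T with hρdef
  have hρpos : 0 < ρ := div_pos hM hT0
  have hρhalf : ρ ≤ 1 / 2 := by
    rw [hρdef, div_le_iff₀ hT0]; linarith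
  have hρlt1 : ρ < 1 := lt_of_le_of_lt hρhalf (by norm_num)
  set term := fun n : ℕ => Phi c (n+1) (x:ℂ) / L ^ (n+1) with hterm_def
  have hPhib : ∀ n : ℕ, ‖Phi c (n+1) (x:ℂ)‖ ≤ M ^ (n+1) := by
    intro n
    refine hPhi (n+1) (by omega) (x:ℂ) ?_ (by simp)
    rw [Complex.norm_real, Real.norm_eq_abs]; exact hxr
  have hterm : ∀ n : ℕ, ‖term n‖ ≤ ρ ^ (n+1) := by
    intro n
    have : ‖term n‖ = ‖Phi c (n+1) (x:ℂ)‖ / (‖L‖) ^ (n+1) := by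
      simp [hterm_def, norm_div, norm_pow]
    rw [this, hρdef, div_pow]
    exact div_le_div₀ (by positivity) (hPhib n) (pow_pos hT0 _)
      (pow_le_pow_left₀ hT0.le habsL _)
  have hgeom0 : Summable (fun n : ℕ => ρ ^ n) := summable_geometric_of_lt_one hρpos.le hρlt1
  have hgeom : Summable (fun n : ℕ => ρ ^ (n+1)) := (summable_nat_add_iff 1).2 hgeom0
  have hsumm : Summable term := Summable.of_norm_bounded hgeom hterm
  have hnorm_summ : Summable fun n => ‖term n‖ :=
    hgeom.of_nonneg_of_le (fun n => norm_nonneg _) hterm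
  have hinv2 : (1 - ρ)⁻¹ ≤ 2 := by
    rw [show (2:ℝ) = (1/2 : ℝ)⁻¹ by norm_num]
    exact inv_anti₀ (by norm_num) (by linarith)
  have htsumgeom : ∑' n : ℕ, ρ ^ (n+1) ≤ 2 * M / T := by
    have h1 : (fun n : ℕ => ρ ^ (n+1)) = fun n : ℕ => ρ * ρ ^ n := by
      funext n; rw [pow_succ']
    rw [h1, tsum_mul_left, tsum_geometric_of_lt_one hρpos.le hρlt1]
    calc ρ * (1 - ρ)⁻¹ ≤ ρ * 2 := by nlinarith
      _ = 2 * M / T := by rw [hρdef]; ring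
  refine ⟨hsumm, ?_, ?_⟩
  · exact (norm_tsum_le_tsum_norm hnorm_summ).trans
      ((Summable.tsum_le_tsum hterm hnorm_summ hgeom).trans htsumgeom)
  · have hSim_eq : (SS c x).im = ∑' n : ℕ, (term n).im := by
      rw [SS, ← hL, ← Complex.imCLM_apply, Complex.imCLM.map_tsum hsumm]; rfl
    have hnormSq : (L).re ^ 2 + (L).im ^ 2 = Complex.normSq L := by
      rw [Complex.normSq_apply]; ring
    have hnsq : T ^ 2 ≤ Complex.normSq L := by
      rw [← hnormSq, log_neg_re hx, hlogx]; nlinarith [sq_nonneg (L.im)]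
    have hnsq0 : 0 < Complex.normSq L := lt_of_lt_of_le (by positivity) hnsq
    set b : ℕ → ℝ := fun n => Nat.casesOn n (M * Real.pi / T ^ 2) fun m => ρ ^ (m+2) with hbdef
    have hb : ∀ n, |(term n).im| ≤ b n := by
      intro n
      cases n with
      | zero =>
        have h0 : term 0 = Phi c 1 (x:ℂ) * (L⁻¹) := by
          simp [hterm_def, div_eq_mul_inv]
        have him : (term 0).im = (Phi c 1 (x:ℂ)).re * (L⁻¹).im := by
          rw [h0, Complex.mul_im, Phi_ofReal_im]; ring
        have hre : |(Phi c 1 (x:ℂ)).re| ≤ M := by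
          refine (Complex.abs_re_le_norm _).trans ?_
          simpa using hPhib 0
        have hinv : |(L⁻¹).im| ≤ Real.pi / T ^ 2 := by
          rw [Complex.inv_im, log_neg_im hx]
          rw [abs_div, abs_neg, abs_of_pos hπ, abs_of_pos hnsq0]
          exact div_le_div_of_nonneg_left hπ.le (by positivity) hnsq
        calc |(term 0).im| = |(Phi c 1 (x:ℂ)).re| * |(L⁻¹).im| := by rw [him, abs_mul]
          _ ≤ M * (Real.pi / T ^ 2) := mul_le_mul hre hinv (abs_nonneg _) hM.le
          _ = b 0 := by simp [hbdef]; ring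
      | succ m =>
        calc |(term (m+1)).im| ≤ ‖term (m+1)‖ := by
              exact Complex.abs_im_le_norm _
          _ ≤ ρ ^ (m+2) := hterm (m+1)
          _ = b (m+1) := rfl
    have hgeom2 : Summable (fun n : ℕ => ρ ^ (n+2)) := (summable_nat_add_iff 2).2 hgeom0
    have hbsumm : Summable b := by
      rw [← summable_nat_add_iff 1]
      exact hgeom2
    have him_summ : Summable fun n => |(term n).im| :=
      hbsumm.of_nonneg_of_le (fun n => abs_nonneg _) hb
    have htsum2 : ∑' n : ℕ, ρ ^ (n+2) ≤ 2 * M ^ 2 / T ^ 2 := by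
      have h1 : (fun n : ℕ => ρ ^ (n+2)) = fun n : ℕ => ρ ^ 2 * ρ ^ n := by
        funext n; ring
      rw [h1, tsum_mul_left, tsum_geometric_of_lt_one hρpos.le hρlt1]
      calc ρ ^ 2 * (1 - ρ)⁻¹ ≤ ρ ^ 2 * 2 := by nlinarith
        _ = 2 * M ^ 2 / T ^ 2 := by rw [hρdef]; field_simp
    calc |(SS c x).im| ≤ ∑' n, |(term n).im| := by
          rw [hSim_eq]
          simpa [Real.norm_eq_abs] using norm_tsum_le_tsum_norm (f := fun n => (term n).im)
            (by simpa [Real.norm_eq_abs] using him_summ)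
      _ ≤ ∑' n, b n := Summable.tsum_le_tsum hb him_summ hbsumm
      _ = b 0 + ∑' n, b (n+1) := Summable.tsum_eq_zero_add hbsumm
      _ = M * Real.pi / T ^ 2 + ∑' n : ℕ, ρ ^ (n+2) := rfl
      _ ≤ M * Real.pi / T ^ 2 + 2 * M ^ 2 / T ^ 2 := by linarith [htsum2]
      _ = (M * Real.pi + 2 * M ^ 2) / T ^ 2 := by ring

set_option maxHeartbeats 2000000 in
/-- With `g(x) = f(x)^{1/d} = u*(x) + i v*(x)` (branch with `1^{1/d} = 1`),
`v*(x) = (a/(2d))·(u*(x))^{1+d} + o((u*(x))^{1+d})` as `x → 0⁻`: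
the curve `Γ^{1/d}` has `d`-th order tangency to `ℝ` at `0`. -/
theorem stmt15 (d a : ℝ) (hd : 0 < d) (c : ℕ → ℕ → ℝ) (hadm : Admissible a c) :
    (fun x : ℝ =>
        (Complex.exp ((1 / (d : ℂ)) * Complex.log (fRep a c (x : ℂ)))).im -
          (a / (2 * d)) *
            ((Complex.exp ((1 / (d : ℂ)) * Complex.log (fRep a c (x : ℂ)))).re) ^ ((1 : ℝ) + d))
      =o[nhdsWithin 0 (Set.Iio (0 : ℝ))]
      (fun x : ℝ =>
        ((Complex.exp ((1 / (d : ℂ)) * Complex.log (fRep a c (x : ℂ)))).re) ^ ((1 : ℝ) + d)) := by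
  obtain ⟨ha, -, ⟨r, hr, M, hM, hPhi⟩, -, -⟩ := hadm
  have hπ := Real.pi_pos
  set l := nhdsWithin (0:ℝ) (Set.Iio (0:ℝ)) with hl
  -- eventual basic facts
  have hev : ∀ᶠ x in l, x < 0 ∧ |x| ≤ r ∧ 2 * M ≤ TT x ∧ 1 ≤ TT x := by
    have h1 : ∀ᶠ x in l, x < 0 := eventually_mem_nhdsWithin
    have h2 : ∀ᶠ x in (𝓝 (0:ℝ)), |x| ≤ r := by
      filter_upwards [Metric.closedBall_mem_nhds (0:ℝ) hr] with x hx
      simpa [Real.dist_eq] using hx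
    have h2' : ∀ᶠ x in l, |x| ≤ r := h2.filter_mono nhdsWithin_le_nhds
    have h3 := tendsto_TT.eventually_ge_atTop (2 * M)
    have h4 := tendsto_TT.eventually_ge_atTop (1:ℝ)
    filter_upwards [h1, h2', h3, h4] with x p1 p2 p3 p4
    exact ⟨p1, p2, p3, p4⟩
  have hkey : ∀ᶠ x : ℝ in l,
      Summable (fun n : ℕ => Phi c (n+1) (x:ℂ) / (Complex.log (x:ℂ)) ^ (n+1)) ∧
      ‖SS c x‖ ≤ 2 * M / TT x ∧
      |(SS c x).im| ≤ (M * Real.pi + 2 * M ^ 2) / (TT x) ^ 2 := by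
    filter_upwards [hev] with x hx
    exact key_est c r M hM hPhi hx.1 hx.2.1 hx.2.2.1 hx.2.2.2
  have hTpos : ∀ᶠ x in l, 0 < TT x := tendsto_TT.eventually_gt_atTop 0
  have hTinv : Tendsto (fun x => (TT x)⁻¹) l (𝓝 0) := tendsto_TT.inv_tendsto_atTop
  -- S → 0
  have hS0 : Tendsto (SS c) l (𝓝 0) := by
    have hbound : ∀ᶠ x : ℝ in l, ‖SS c x‖ ≤ 2 * M * (TT x)⁻¹ := by
      filter_upwards [hkey] with x hx
      simpa [div_eq_mul_inv] using hx.2.1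
    have hlim : Tendsto (fun x : ℝ => 2 * M * (TT x)⁻¹) l (𝓝 0) := by
      have h := (tendsto_const_nhds (x := 2*M) (f := l)).mul hTinv
      simpa using h
    exact squeeze_zero_norm' hbound hlim
  have hSre : Tendsto (fun x => (SS c x).re) l (𝓝 0) := by
    have := (Complex.continuous_re.tendsto 0).comp hS0
    simpa [Function.comp_def] using this
  have hSim : Tendsto (fun x => (SS c x).im) l (𝓝 0) := by
    have := (Complex.continuous_im.tendsto 0).comp hS0
    simpa [Function.comp_def] using this
  -- T·Im S → 0
  have hTSim : Tendsto (fun x => TT x * (SS c x).im) l (𝓝 0) := by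
    have hbound : ∀ᶠ x : ℝ in l,
        ‖TT x * (SS c x).im‖ ≤ (M * Real.pi + 2 * M ^ 2) * (TT x)⁻¹ := by
      filter_upwards [hkey, hTpos] with x hx hT
      have h1 : |TT x * (SS c x).im| = TT x * |(SS c x).im| := by
        rw [abs_mul, abs_of_pos hT]
      have h2 : TT x * ((M * Real.pi + 2 * M ^ 2) / (TT x) ^ 2)
          = (M * Real.pi + 2 * M ^ 2) * (TT x)⁻¹ := by
        field_simp
      rw [Real.norm_eq_abs, h1]
      calc TT x * |(SS c x).im| ≤ TT x * ((M * Real.pi + 2 * M ^ 2) / (TT x) ^ 2) :=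
            mul_le_mul_of_nonneg_left hx.2.2 hT.le
        _ = (M * Real.pi + 2 * M ^ 2) * (TT x)⁻¹ := h2
    have hlim : Tendsto (fun x : ℝ => (M * Real.pi + 2 * M ^ 2) * (TT x)⁻¹) l (𝓝 0) := by
      have h := (tendsto_const_nhds (x := M * Real.pi + 2 * M ^ 2) (f := l)).mul hTinv
      simpa using h
    exact squeeze_zero_norm' hbound hlim
  -- re/im formulas for w
  have hwim : ∀ x, (ww c x).im = TT x * (SS c x).im + Real.pi * (1 + (SS c x).re) := by
    intro x
    simp [ww, Complex.add_im, Complex.add_re, Complex.mul_im, Complex.mul_re]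
  have hwre : ∀ x, (ww c x).re = TT x * (1 + (SS c x).re) - Real.pi * (SS c x).im := by
    intro x
    simp [ww, Complex.add_im, Complex.add_re, Complex.mul_im, Complex.mul_re]
  have hwim_lim : Tendsto (fun x => (ww c x).im) l (𝓝 Real.pi) := by
    have h := hTSim.add ((tendsto_const_nhds (x := Real.pi) (f := l)).mul
      ((tendsto_const_nhds (x := (1:ℝ)) (f := l)).add hSre))
    simp only [hwim]
    simpa using h
  have hwreT : Tendsto (fun x => (ww c x).re / TT x) l (𝓝 1) := by
    have heq : ∀ᶠ x in l, (ww c x).re / TT x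
        = (1 + (SS c x).re) - (Real.pi * (SS c x).im) * (TT x)⁻¹ := by
      filter_upwards [hTpos] with x hT
      rw [hwre]
      field_simp
    rw [tendsto_congr' heq]
    have h := (((tendsto_const_nhds (x := (1:ℝ)) (f := l)).add hSre).sub
      (((tendsto_const_nhds (x := Real.pi) (f := l)).mul hSim).mul hTinv))
    simpa using h
  have hwabsT : Tendsto (fun x => ‖ww c x‖ / TT x) l (𝓝 1) := by
    have heq : ∀ᶠ x in l, ‖ww c x‖ / TT x
        = Real.sqrt (((ww c x).re / TT x) ^ 2 + ((ww c x).im / TT x) ^ 2) := by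
      filter_upwards [hTpos] with x hT
      have h1 : ((ww c x).re / TT x) ^ 2 + ((ww c x).im / TT x) ^ 2
          = Complex.normSq (ww c x) / (TT x) ^ 2 := by
        rw [Complex.normSq_apply]; field_simp
      rw [h1, Complex.norm_def, Real.sqrt_div (Complex.normSq_nonneg _),
        Real.sqrt_sq hT.le]
    rw [tendsto_congr' heq]
    have hsum : Tendsto (fun x => ((ww c x).re / TT x) ^ 2 + ((ww c x).im / TT x) ^ 2) l
        (𝓝 1) := by
      have h1 : Tendsto (fun x => ((ww c x).re / TT x) ^ 2) l (𝓝 1) := by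
        simpa using hwreT.pow 2
      have h2 : Tendsto (fun x => ((ww c x).im / TT x) ^ 2) l (𝓝 0) := by
        have h3 : Tendsto (fun x => (ww c x).im / TT x) l (𝓝 0) := by
          have := hwim_lim.mul hTinv
          simpa [div_eq_mul_inv] using this
        simpa using h3.pow 2
      simpa using h1.add h2
    have := (Real.continuous_sqrt.tendsto 1).comp hsum
    simpa [Function.comp_def] using this
  -- positivity
  have hwre_pos : ∀ᶠ x in l, 0 < (ww c x).re := by
    have h := hwreT.eventually (eventually_gt_nhds (show (0:ℝ) < 1 by norm_num))
    filter_upwards [h, hTpos] with x h1 h2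
    have := mul_pos h1 h2
    rwa [div_mul_cancel₀ _ h2.ne'] at this
  have hwim_pos : ∀ᶠ x in l, 0 < (ww c x).im :=
    hwim_lim.eventually (eventually_gt_nhds hπ)
  have hwabs_pos : ∀ᶠ x in l, 0 < ‖ww c x‖ := by
    filter_upwards [hwre_pos] with x h1
    have : ww c x ≠ 0 := by
      intro h; rw [h] at h1; simp at h1
    exact norm_pos_iff.mpr this
  have hKpos : ∀ x, 0 < KK a x := by
    intro x
    apply div_pos (by positivity)
    exact mul_pos ha (by positivity)
  -- f = K·w and consequences
  have hf_eq : ∀ᶠ x : ℝ in l, fRep a c (x:ℂ) = ((KK a x : ℝ) : ℂ) * ww c x := by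
    filter_upwards [hev] with x hx
    exact fRep_eq a c ha hx.1
  have hf_re : ∀ᶠ x : ℝ in l, (fRep a c (x:ℂ)).re = KK a x * (ww c x).re := by
    filter_upwards [hf_eq] with x hx
    rw [hx]; simp [Complex.mul_re]
  have hf_im : ∀ᶠ x : ℝ in l, (fRep a c (x:ℂ)).im = KK a x * (ww c x).im := by
    filter_upwards [hf_eq] with x hx
    rw [hx]; simp [Complex.mul_im]
  have hf_abs : ∀ᶠ x : ℝ in l, ‖fRep a c (x:ℂ)‖ = KK a x * ‖ww c x‖ := by
    filter_upwards [hf_eq] with x hx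
    rw [hx, norm_mul, Complex.norm_real, Real.norm_eq_abs, abs_of_pos (hKpos x)]
  have hf_re_pos : ∀ᶠ x : ℝ in l, 0 < (fRep a c (x:ℂ)).re := by
    filter_upwards [hf_re, hwre_pos] with x h1 h2
    rw [h1]; exact mul_pos (hKpos x) h2
  have hf_im_pos : ∀ᶠ x : ℝ in l, 0 < (fRep a c (x:ℂ)).im := by
    filter_upwards [hf_im, hwim_pos] with x h1 h2
    rw [h1]; exact mul_pos (hKpos x) h2
  have hf_abs_pos : ∀ᶠ x : ℝ in l, 0 < ‖fRep a c (x:ℂ)‖ := by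
    filter_upwards [hf_abs, hwabs_pos] with x h1 h2
    rw [h1]; exact mul_pos (hKpos x) h2
  -- the slope q = im w / re w
  set q : ℝ → ℝ := fun x => (ww c x).im / (ww c x).re with hqdef
  have hinv_wre : Tendsto (fun x => ((ww c x).re)⁻¹) l (𝓝 0) := by
    have heq : ∀ᶠ x in l, ((ww c x).re)⁻¹ = (TT x)⁻¹ * ((ww c x).re / TT x)⁻¹ := by
      filter_upwards [hTpos, hwre_pos] with x h1 h2
      field_simp
    rw [tendsto_congr' heq]
    have h := hTinv.mul (hwreT.inv₀ one_ne_zero)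
    simpa using h
  have hq0 : Tendsto q l (𝓝 0) := by
    have h := hwim_lim.mul hinv_wre
    simp only [hqdef, div_eq_mul_inv]
    simpa using h
  have hqpos : ∀ᶠ x in l, 0 < q x := by
    filter_upwards [hwim_pos, hwre_pos] with x h1 h2
    exact div_pos h1 h2
  -- arg f = arctan q
  have harg_eq : ∀ᶠ x : ℝ in l, Complex.arg (fRep a c (x:ℂ)) = Real.arctan (q x) := by
    filter_upwards [hf_re_pos, hf_re, hf_im, hwre_pos] with x h1 h2 h3 h4
    have habs : |Complex.arg (fRep a c (x:ℂ))| < Real.pi / 2 :=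
      Complex.abs_arg_lt_pi_div_two_iff.mpr (Or.inl h1)
    have h5 : (fRep a c (x:ℂ)).im / (fRep a c (x:ℂ)).re = q x := by
      rw [h2, h3, hqdef]
      exact mul_div_mul_left _ _ (hKpos x).ne'
    rw [← h5, ← Complex.tan_arg,
      Real.arctan_tan (abs_lt.mp habs).1 (abs_lt.mp habs).2]
  have hθ0 : Tendsto (fun x : ℝ => Complex.arg (fRep a c (x:ℂ))) l (𝓝 0) := by
    rw [tendsto_congr' harg_eq]
    have := (Real.continuous_arctan.tendsto 0).comp hq0
    simpa [Function.comp_def] using this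
  have hθpos : ∀ᶠ x : ℝ in l, 0 < Complex.arg (fRep a c (x:ℂ)) := by
    filter_upwards [harg_eq, hqpos] with x h1 h2
    rw [h1, ← Real.arctan_zero]
    exact Real.arctan_strictMono h2
  -- the crucial limit: arg f / |f| → a/2
  have hθρ : Tendsto (fun x : ℝ => Complex.arg (fRep a c (x:ℂ)) / ‖fRep a c (x:ℂ)‖)
      l (𝓝 (a / 2)) := by
    have heq : ∀ᶠ x : ℝ in l, Complex.arg (fRep a c (x:ℂ)) / ‖fRep a c (x:ℂ)‖
        = (Real.arctan (q x) / q x) * ((a / (2 * Real.pi)) * (ww c x).im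
            * (1 + (Real.pi * (TT x)⁻¹) ^ 2) * ((ww c x).re / TT x)⁻¹
            * (‖ww c x‖ / TT x)⁻¹) := by
      filter_upwards [harg_eq, hf_abs, hTpos, hwre_pos, hwim_pos, hwabs_pos]
        with x h1 h2 hT hR hIm hA
      rw [h1, h2, hqdef, KK]
      have hane : a ≠ 0 := ha.ne'
      have hπne : Real.pi ≠ 0 := hπ.ne'
      have hTne : TT x ≠ 0 := hT.ne'
      have hRne : (ww c x).re ≠ 0 := hR.ne'
      have hImne : (ww c x).im ≠ 0 := hIm.ne'
      have hAne : ‖ww c x‖ ≠ 0 := hA.ne'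
      have hsum : a * ((TT x)^2 + Real.pi^2) ≠ 0 := by positivity
      field_simp
    rw [tendsto_congr' heq]
    have hq' : Tendsto q l (𝓝[≠] (0:ℝ)) := by
      rw [tendsto_nhdsWithin_iff]
      exact ⟨hq0, by filter_upwards [hqpos] with x hx using hx.ne'⟩
    have hfac1 : Tendsto (fun x => Real.arctan (q x) / q x) l (𝓝 1) :=
      tendsto_arctan_div.comp hq'
    have hfac2 : Tendsto (fun x => (a / (2 * Real.pi)) * (ww c x).im
        * (1 + (Real.pi * (TT x)⁻¹) ^ 2) * ((ww c x).re / TT x)⁻¹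
        * (‖ww c x‖ / TT x)⁻¹) l
        (𝓝 ((a / (2 * Real.pi)) * Real.pi * 1 * 1⁻¹ * 1⁻¹)) := by
      refine ((((tendsto_const_nhds.mul hwim_lim).mul ?_).mul
        (hwreT.inv₀ one_ne_zero)).mul (hwabsT.inv₀ one_ne_zero))
      have h := ((tendsto_const_nhds (x := Real.pi) (f := l)).mul hTinv).pow 2
      have h2 := (tendsto_const_nhds (x := (1:ℝ)) (f := l)).add h
      simpa using h2
    have := hfac1.mul hfac2
    have hval : (1:ℝ) * ((a / (2 * Real.pi)) * Real.pi * 1 * 1⁻¹ * 1⁻¹) = a / 2 := by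
      field_simp
    rwa [hval] at this
  -- ### the curve f^{1/d}
  have hdC : (1 / (d:ℂ)) = (((1/d : ℝ)):ℂ) := by push_cast; ring
  have hθsmall : ∀ᶠ x : ℝ in l, Complex.arg (fRep a c (x:ℂ)) < d * (Real.pi / 2) :=
    hθ0.eventually (eventually_lt_nhds (by positivity))
  -- polar coordinates of the point on the curve
  have hu_eq : ∀ᶠ x : ℝ in l,
      (Complex.exp ((1 / (d : ℂ)) * Complex.log (fRep a c (x : ℂ)))).re
        = (‖fRep a c (x:ℂ)‖) ^ ((1:ℝ)/d)
            * Real.cos (Complex.arg (fRep a c (x:ℂ)) / d) := by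
    filter_upwards [hf_abs_pos] with x hA
    rw [hdC, Complex.exp_re]
    have h1 : (((1/d : ℝ) : ℂ) * Complex.log (fRep a c (x:ℂ))).re
        = (1/d) * Real.log (‖fRep a c (x:ℂ)‖) := by
      rw [Complex.re_ofReal_mul, Complex.log_re]
    have h2 : (((1/d : ℝ) : ℂ) * Complex.log (fRep a c (x:ℂ))).im
        = (1/d) * Complex.arg (fRep a c (x:ℂ)) := by
      rw [Complex.im_ofReal_mul, Complex.log_im]
    rw [h1, h2, Real.rpow_def_of_pos hA]
    rw [mul_comm (Real.log _) ((1:ℝ)/d)]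
    ring_nf
  have hv_eq : ∀ᶠ x : ℝ in l,
      (Complex.exp ((1 / (d : ℂ)) * Complex.log (fRep a c (x : ℂ)))).im
        = (‖fRep a c (x:ℂ)‖) ^ ((1:ℝ)/d)
            * Real.sin (Complex.arg (fRep a c (x:ℂ)) / d) := by
    filter_upwards [hf_abs_pos] with x hA
    rw [hdC, Complex.exp_im]
    have h1 : (((1/d : ℝ) : ℂ) * Complex.log (fRep a c (x:ℂ))).re
        = (1/d) * Real.log (‖fRep a c (x:ℂ)‖) := by
      rw [Complex.re_ofReal_mul, Complex.log_re]
    have h2 : (((1/d : ℝ) : ℂ) * Complex.log (fRep a c (x:ℂ))).im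
        = (1/d) * Complex.arg (fRep a c (x:ℂ)) := by
      rw [Complex.im_ofReal_mul, Complex.log_im]
    rw [h1, h2, Real.rpow_def_of_pos hA]
    rw [mul_comm (Real.log _) ((1:ℝ)/d)]
    ring_nf
  have hφmem : ∀ᶠ x : ℝ in l, 0 < Complex.arg (fRep a c (x:ℂ)) / d
      ∧ Complex.arg (fRep a c (x:ℂ)) / d < Real.pi / 2 := by
    filter_upwards [hθpos, hθsmall] with x h1 h2
    constructor
    · exact div_pos h1 hd
    · rw [div_lt_iff₀ hd, mul_comm]
      exact h2
  have hcos_pos : ∀ᶠ x : ℝ in l, 0 < Real.cos (Complex.arg (fRep a c (x:ℂ)) / d) := by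
    filter_upwards [hφmem] with x hx
    exact Real.cos_pos_of_mem_Ioo ⟨by linarith [hx.1, Real.pi_pos], hx.2⟩
  have hupos : ∀ᶠ x : ℝ in l,
      0 < (Complex.exp ((1 / (d : ℂ)) * Complex.log (fRep a c (x : ℂ)))).re := by
    filter_upwards [hu_eq, hf_abs_pos, hcos_pos] with x h1 h2 h3
    rw [h1]
    exact mul_pos (Real.rpow_pos_of_pos h2 _) h3
  -- ratio identity
  have hratio_eq : ∀ᶠ x : ℝ in l,
      (Complex.exp ((1 / (d : ℂ)) * Complex.log (fRep a c (x : ℂ)))).im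
        / ((Complex.exp ((1 / (d : ℂ)) * Complex.log (fRep a c (x : ℂ)))).re) ^ ((1:ℝ) + d)
      = (Real.sin (Complex.arg (fRep a c (x:ℂ)) / d) / (Complex.arg (fRep a c (x:ℂ)) / d))
        * ((Complex.arg (fRep a c (x:ℂ)) / ‖fRep a c (x:ℂ)‖) / d)
        * ((Real.cos (Complex.arg (fRep a c (x:ℂ)) / d)) ^ ((1:ℝ) + d))⁻¹ := by
    filter_upwards [hu_eq, hv_eq, hf_abs_pos, hθpos, hφmem, hcos_pos] with x h1 h2 hA hθ hφ hcos
    rw [h1, h2]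
    set A := ‖fRep a c (x:ℂ)‖ with hAdef
    set θ := Complex.arg (fRep a c (x:ℂ)) with hθdef
    have hA1d : 0 < A ^ ((1:ℝ)/d) := Real.rpow_pos_of_pos hA _
    have hpow : (A ^ ((1:ℝ)/d) * Real.cos (θ / d)) ^ ((1:ℝ) + d)
        = A ^ ((1:ℝ)/d) * A * (Real.cos (θ / d)) ^ ((1:ℝ) + d) := by
      rw [Real.mul_rpow hA1d.le hcos.le]
      congr 1
      rw [← Real.rpow_mul hA.le]
      have hexp : (1/d) * (1 + d) = 1/d + 1 := by field_simp
      rw [hexp, Real.rpow_add hA, Real.rpow_one]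
    rw [hpow]
    have hcospow : 0 < (Real.cos (θ / d)) ^ ((1:ℝ) + d) := Real.rpow_pos_of_pos hcos _
    field_simp
  -- limit of the ratio
  have hφ0 : Tendsto (fun x : ℝ => Complex.arg (fRep a c (x:ℂ)) / d) l (𝓝 0) := by
    have := hθ0.div_const d
    simpa using this
  have hφ' : Tendsto (fun x : ℝ => Complex.arg (fRep a c (x:ℂ)) / d) l (𝓝[≠] (0:ℝ)) := by
    rw [tendsto_nhdsWithin_iff]
    refine ⟨hφ0, ?_⟩
    filter_upwards [hφmem] with x hx
    exact hx.1.ne'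
  have hfac1 : Tendsto (fun x : ℝ =>
      Real.sin (Complex.arg (fRep a c (x:ℂ)) / d) / (Complex.arg (fRep a c (x:ℂ)) / d)) l
      (𝓝 1) := tendsto_sin_div.comp hφ'
  have hfac2 : Tendsto (fun x : ℝ =>
      (Complex.arg (fRep a c (x:ℂ)) / ‖fRep a c (x:ℂ)‖) / d) l (𝓝 (a / 2 / d)) :=
    hθρ.div_const d
  have hfac3 : Tendsto (fun x : ℝ =>
      ((Real.cos (Complex.arg (fRep a c (x:ℂ)) / d)) ^ ((1:ℝ) + d))⁻¹) l (𝓝 1) := by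
    have hcos0 : Tendsto (fun x : ℝ => Real.cos (Complex.arg (fRep a c (x:ℂ)) / d)) l (𝓝 1) := by
      have := (Real.continuous_cos.tendsto 0).comp hφ0
      simpa [Function.comp_def] using this
    have hrpow : Tendsto (fun x : ℝ =>
        (Real.cos (Complex.arg (fRep a c (x:ℂ)) / d)) ^ ((1:ℝ) + d)) l (𝓝 1) := by
      have hcont := (Real.continuousAt_rpow_const 1 ((1:ℝ) + d) (Or.inl one_ne_zero)).tendsto
      have := hcont.comp hcos0
      simpa [Real.one_rpow, Function.comp_def] using this
    have := hrpow.inv₀ one_ne_zero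
    simpa using this
  have hRlim : Tendsto (fun x : ℝ =>
      (Complex.exp ((1 / (d : ℂ)) * Complex.log (fRep a c (x : ℂ)))).im
        / ((Complex.exp ((1 / (d : ℂ)) * Complex.log (fRep a c (x : ℂ)))).re) ^ ((1:ℝ) + d)) l
      (𝓝 (a / (2 * d))) := by
    rw [tendsto_congr' hratio_eq]
    have h := (hfac1.mul hfac2).mul hfac3
    have hval : (1:ℝ) * (a / 2 / d) * 1 = a / (2 * d) := by
      rw [div_div]; ring
    rwa [hval] at h
  -- conclusion
  have hne : ∀ᶠ x : ℝ in l,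
      ((Complex.exp ((1 / (d : ℂ)) * Complex.log (fRep a c (x : ℂ)))).re) ^ ((1:ℝ) + d) ≠ 0 := by
    filter_upwards [hupos] with x hx
    exact (Real.rpow_pos_of_pos hx _).ne'
  rw [Asymptotics.isLittleO_iff_tendsto' (by
    filter_upwards [hne] with x hx h
    exact absurd h hx)]
  have heq2 : ∀ᶠ x : ℝ in l,
      ((Complex.exp ((1 / (d : ℂ)) * Complex.log (fRep a c (x : ℂ)))).im -
        a / (2 * d) *
          ((Complex.exp ((1 / (d : ℂ)) * Complex.log (fRep a c (x : ℂ)))).re) ^ ((1:ℝ) + d))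
        / ((Complex.exp ((1 / (d : ℂ)) * Complex.log (fRep a c (x : ℂ)))).re) ^ ((1:ℝ) + d)
      = (Complex.exp ((1 / (d : ℂ)) * Complex.log (fRep a c (x : ℂ)))).im
        / ((Complex.exp ((1 / (d : ℂ)) * Complex.log (fRep a c (x : ℂ)))).re) ^ ((1:ℝ) + d)
        - a / (2 * d) := by
    filter_upwards [hne] with x hx
    rw [sub_div, mul_div_assoc, div_self hx, mul_one]
  rw [tendsto_congr' heq2]
  have := hRlim.sub (tendsto_const_nhds (x := a / (2*d)) (f := l))
  simpa using this
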